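/- If f is a model satisfying Invariant Aggregation, then for every tuple of marginals p and every s in [z], F_{f(p)}(s) = F_{f(b_x)}(1,...,1), where x = (F_{p₁}(s₁),...,F_{pₙ}(sₙ)) and b_x = (b_{x₁},...,b_{xₙ}) with b_t the distribution on {1,2} giving mass t to 1 and 1−t to 2. That is, the CDF of f(p) at s is determined solely by the vector of marginal CDF values at s. -/

import Mathlib

open MeasureTheory Finset Function

noncomputable section

/-- The uniform probability measure on `[0,1] ⊆ ℝ`. -/
def unif01 : Measure ℝ := volume.restrict (Set.Icc 0 1)

/-- `q` is a probability mass function on `[w] = {1,…,w}`. -/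
def IsPMF (w : ℕ) (q : ℕ → ℝ) : Prop :=
  (∀ t, 0 ≤ q t) ∧ (∀ t, t ∉ Finset.Icc 1 w → q t = 0) ∧
    ∑ t ∈ Finset.Icc 1 w, q t = 1

/-- Collapse of adjacent bins `j` and `j+1`: `q^j(t) = q(t)·1{t ≤ j} + q(t+1)·1{t ≥ j}`. -/
def collapsePM (j : ℕ) (q : ℕ → ℝ) : ℕ → ℝ :=
  fun t => (if t ≤ j then q t else 0) + (if j ≤ t then q (t + 1) else 0)

/-- CDF of a pmf on `{1,…,w}`. -/
def pmfCDF (q : ℕ → ℝ) (t : ℕ) : ℝ := ∑ s ∈ Finset.Icc 1 t, q s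

/-- The product box `∏ᵢ {1,…,zᵢ}`. -/
def prodBox {n : ℕ} (z : Fin n → ℕ) : Finset (Fin n → ℕ) :=
  Fintype.piFinset fun i => Finset.Icc 1 (z i)

/-- `μ` is a joint pmf on `∏ᵢ {1,…,zᵢ}`. -/
def IsJointPMF {n : ℕ} (z : Fin n → ℕ) (μ : (Fin n → ℕ) → ℝ) : Prop :=
  (∀ s, 0 ≤ μ s) ∧ (∀ s, s ∉ prodBox z → μ s = 0) ∧ ∑ s ∈ prodBox z, μ s = 1

/-- The `i`-th marginal of a joint pmf. -/
def jointMarginal {n : ℕ} (z : Fin n → ℕ) (μ : (Fin n → ℕ) → ℝ) (i : Fin n) (t : ℕ) : ℝ :=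
  ∑ s ∈ (prodBox z).filter fun s => s i = t, μ s

/-- Joint CDF of a joint pmf. -/
def jointCDF {n : ℕ} (μ : (Fin n → ℕ) → ℝ) (s : Fin n → ℕ) : ℝ :=
  ∑ t ∈ Fintype.piFinset fun i => Finset.Icc 1 (s i), μ t

/-- A (candidate) model: assigns to each `z` and tuple of marginals a joint pmf. -/
abbrev Model (n : ℕ) := (z : Fin n → ℕ) → (Fin n → ℕ → ℝ) → (Fin n → ℕ) → ℝ

/-- `f` is a model: it returns a joint pmf whose marginals are the inputs. -/
def IsModel {n : ℕ} (f : Model n) : Prop :=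
  ∀ z p, (∀ i, IsPMF (z i) (p i)) →
    IsJointPMF z (f z p) ∧ ∀ i t, jointMarginal z (f z p) i t = p i t

/-- Invariant Aggregation: merging adjacent bins `j, j+1` of marginal `i`
does not affect the joint distribution over unaffected values. -/
def SatisfiesIA {n : ℕ} (f : Model n) : Prop :=
  ∀ z p, (∀ i, IsPMF (z i) (p i)) → ∀ i : Fin n, ∀ j ∈ Finset.Icc 1 (z i - 1),
    ∀ s ∈ prodBox (Function.update z i (z i - 1)),
      f (Function.update z i (z i - 1)) (Function.update p i (collapsePM j (p i))) s =
        (if s i ≤ j then f z p s else 0) +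
          (if j ≤ s i then f z p (Function.update s i (s i + 1)) else 0)

/-- A copula measure: a probability measure on `[0,1]^ι` with standard uniform marginals. -/
def IsCopulaMeasure {ι : Type*} [Fintype ι] (μ : Measure (ι → ℝ)) : Prop :=
  IsProbabilityMeasure μ ∧ ∀ i : ι, μ.map (fun t => t i) = unif01

/-- `C` is a copula: the CDF of a probability measure with uniform marginals. -/
def IsCopula {ι : Type*} [Fintype ι] (C : (ι → ℝ) → ℝ) : Prop :=
  ∃ μ : Measure (ι → ℝ), IsCopulaMeasure μ ∧
    ∀ x : ι → ℝ, (∀ i, x i ∈ Set.Icc (0 : ℝ) 1) →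
      (μ {t | ∀ i, t i ≤ x i}).toReal = C x

/-- `f` is a copula model with copula `C`: `F_{f(p)}(s) = C(F_{p₁}(s₁),…,F_{pₙ}(sₙ))`. -/
def IsCopulaModelWith {n : ℕ} (f : Model n) (C : (Fin n → ℝ) → ℝ) : Prop :=
  IsCopula C ∧ ∀ z p, (∀ i, IsPMF (z i) (p i)) → ∀ s ∈ prodBox z,
    jointCDF (f z p) s = C fun i => pmfCDF (p i) (s i)

/-- The binary distribution `b_t` on `{1,2}` with `b_t(1) = t`, `b_t(2) = 1 - t`. -/
def binPMF (t : ℝ) : ℕ → ℝ := fun s => if s = 1 then t else if s = 2 then 1 - t else 0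

/-- `σ` is a permutation of `{1,…,w}` (fixing everything else). -/
def PermOn (w : ℕ) (σ : Equiv.Perm ℕ) : Prop := ∀ t ∉ Finset.Icc 1 w, σ t = t

/-- `M`-neutrality for `M = {i : (i : ℕ) < m}`: relabelling the bins of a marginal in `M`
just relabels the joint distribution accordingly. -/
def MNeutral {n : ℕ} (f : Model n) (m : ℕ) : Prop :=
  ∀ z p, (∀ i, IsPMF (z i) (p i)) → ∀ i : Fin n, (i : ℕ) < m →
    ∀ σ : Equiv.Perm ℕ, PermOn (z i) σ → ∀ s ∈ prodBox z,
      f z (Function.update p i fun t => p i (σ t)) s =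
        f z p (Function.update s i (σ (s i)))

/-- A coupling of two pmfs `q₁` on `[w₁]`, `q₂` on `[w₂]`. -/
def IsCoupling (w₁ w₂ : ℕ) (q₁ q₂ : ℕ → ℝ) (μ : ℕ × ℕ → ℝ) : Prop :=
  (∀ a, 0 ≤ μ a) ∧ (∀ a, a ∉ (Finset.Icc 1 w₁) ×ˢ (Finset.Icc 1 w₂) → μ a = 0) ∧
    (∀ s, ∑ t ∈ Finset.Icc 1 w₂, μ (s, t) = q₁ s) ∧
    (∀ t, ∑ s ∈ Finset.Icc 1 w₁, μ (s, t) = q₂ t)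

/-- Diagonal mass of a coupling. -/
def diagMass (w₁ w₂ : ℕ) (μ : ℕ × ℕ → ℝ) : ℝ :=
  ∑ s ∈ Finset.Icc 1 (min w₁ w₂), μ (s, s)

/-- A maximal coupling: a coupling maximizing the diagonal mass. -/
def IsMaxCoupling (w₁ w₂ : ℕ) (q₁ q₂ : ℕ → ℝ) (μ : ℕ × ℕ → ℝ) : Prop :=
  IsCoupling w₁ w₂ q₁ q₂ μ ∧
    ∀ ν, IsCoupling w₁ w₂ q₁ q₂ ν → diagMass w₁ w₂ ν ≤ diagMass w₁ w₂ μ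

lemma collapse_sum (q : ℕ → ℝ) (j : ℕ) (hj : 1 ≤ j) (m : ℕ) :
    ∑ t ∈ Finset.Icc 1 m, collapsePM j q t
      = ∑ t ∈ Finset.Icc 1 (if m < j then m else m + 1), q t := by
  induction m with
  | zero => simp [if_pos (by omega : 0 < j)]
  | succ m ih =>
    rw [Finset.sum_Icc_succ_top (by omega), ih]
    by_cases h1 : m + 1 < j
    · rw [if_pos (by omega : m < j), if_pos h1, Finset.sum_Icc_succ_top (by omega)]
      simp [collapsePM, if_pos (by omega : m+1 ≤ j), if_neg (by omega : ¬ j ≤ m+1)]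
      intro h; omega
    · by_cases h2 : m < j
      · have hm : m + 1 = j := by omega
        rw [if_pos h2, if_neg h1, Finset.sum_Icc_succ_top (by omega),
          Finset.sum_Icc_succ_top (by omega)]
        simp only [collapsePM, if_pos (by omega : m+1 ≤ j), if_pos (by omega : j ≤ m+1), hm]
        simp; ring
      · rw [if_neg h2, if_neg h1, Finset.sum_Icc_succ_top (by omega),
          Finset.sum_Icc_succ_top (by omega)]
        simp [collapsePM, if_neg (by omega : ¬ m+1 ≤ j), if_pos (by omega : j ≤ m+1)]
        rw [Finset.sum_Icc_succ_top (by omega : 1 ≤ m+1)]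
        simp [h2]

lemma collapse_cdf (q : ℕ → ℝ) (j : ℕ) (hj : 1 ≤ j) (m : ℕ) :
    pmfCDF (collapsePM j q) m = pmfCDF q (if m < j then m else m + 1) := by
  unfold pmfCDF; split <;> [skip; skip] <;>
    · rw [collapse_sum q j hj m]; split <;> first | rfl | omega

lemma collapse_isPMF {w j : ℕ} {q : ℕ → ℝ} (hq : IsPMF w q) (hj1 : 1 ≤ j)
    (hj2 : j ≤ w - 1) (hw : 2 ≤ w) : IsPMF (w - 1) (collapsePM j q) := by
  obtain ⟨h0, hsupp, hsum⟩ := hq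
  refine ⟨fun t => ?_, fun t ht => ?_, ?_⟩
  · exact add_nonneg (by split; exacts [h0 t, le_rfl]) (by split; exacts [h0 _, le_rfl])
  · simp only [Finset.mem_Icc, not_and, not_le] at ht
    unfold collapsePM
    rcases Nat.lt_or_ge t 1 with h | h
    · have ht0 : t = 0 := by omega
      subst ht0
      rw [if_pos (by omega), if_neg (by omega), hsupp 0 (by simp), add_zero]
    · have : w - 1 < t := ht h
      rw [if_neg (by omega), if_pos (by omega), zero_add]
      exact hsupp _ (by simp only [Finset.mem_Icc, not_and, not_le]; omega)
  · rw [collapse_sum q j hj1 (w-1), if_neg (by omega)]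
    have : w - 1 + 1 = w := by omega
    rw [this, hsum]

lemma isPMF_binPMF_one : IsPMF 2 (binPMF 1) := by
  refine ⟨fun t => ?_, fun t ht => ?_, ?_⟩
  · unfold binPMF; split <;> norm_num
  · simp only [Finset.mem_Icc, not_and, not_le] at ht
    unfold binPMF
    rw [if_neg (by omega), if_neg (by omega)]
  · show ∑ t ∈ Finset.Icc 1 2, binPMF 1 t = 1
    rw [show Finset.Icc 1 2 = {1, 2} by rfl]
    simp [binPMF]

lemma piFinset_ones {n : ℕ} (s : Fin n → ℕ) (h : ∀ i, s i = 1) :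
    (Fintype.piFinset fun i => Finset.Icc 1 (s i)) = {fun _ => 1} := by
  ext t
  simp only [Fintype.mem_piFinset, Finset.mem_Icc, Finset.mem_singleton, funext_iff]
  constructor
  · intro ht i; have := ht i; rw [h i] at this; omega
  · intro ht i; rw [h i, ht i]; omega

lemma expand_base {n : ℕ} (f : Model n) (z : Fin n → ℕ) (p : Fin n → ℕ → ℝ)
    (hp : ∀ i, IsPMF (z i) (p i)) (hz : ∀ i, z i = 2) :
    f z p (fun _ => 1) =
      f (fun _ => 2) (fun i => binPMF (pmfCDF (p i) 1)) (fun _ => 1) := by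
  have hzz : z = fun _ => 2 := funext hz
  have hpp : (fun i => binPMF (pmfCDF (p i) 1)) = p := by
    funext i t
    obtain ⟨h0, hsupp, hsum⟩ := hp i
    rw [hz i] at hsum
    have hcdf : pmfCDF (p i) 1 = p i 1 := by
      unfold pmfCDF; rw [Finset.Icc_self, Finset.sum_singleton]
    have hsum2 : p i 1 + p i 2 = 1 := by
      rw [show Finset.Icc 1 2 = {1, 2} by rfl] at hsum
      simpa using hsum
    rcases Nat.lt_or_ge t 1 with h | h
    · have : t = 0 := by omega
      subst this
      simp [binPMF, hcdf, hsupp 0 (by simp)]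
    · rcases Nat.lt_or_ge t 3 with h2 | h2
      · interval_cases t
        · simp [binPMF, hcdf]
        · simp only [binPMF, hcdf]; norm_num; linarith
      · rw [binPMF, if_neg (by omega), if_neg (by omega),
          hsupp t (by simp only [hz i, Finset.mem_Icc, not_and, not_le]; omega)]
  rw [hpp, ← hzz]

lemma expand_lemma {n : ℕ} (f : Model n) (hf : IsModel f) (hIA : SatisfiesIA f) :
    ∀ N (z : Fin n → ℕ) (p : Fin n → ℕ → ℝ), (∀ i, IsPMF (z i) (p i)) →
      (∀ i, z i = 1 ∨ z i = 2) →
      (Finset.univ.filter fun i => z i = 1).card ≤ N →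
      f z p (fun _ => 1) =
        f (fun _ => 2) (fun i => binPMF (pmfCDF (p i) 1)) (fun _ => 1) := by
  intro N
  induction N with
  | zero =>
    intro z p hp hz hcard
    refine expand_base f z p hp fun i => ?_
    rcases hz i with h | h
    · exfalso
      have : i ∈ Finset.univ.filter fun k => z k = 1 := by simp [h]
      have := Finset.card_pos.mpr ⟨i, this⟩
      omega
    · exact h
  | succ N ih =>
    intro z p hp hz hcard
    by_cases hex : ∃ i, z i = 1
    · obtain ⟨i, hzi⟩ := hex
      set z' := Function.update z i 2 with hz'def
      set p' := Function.update p i (binPMF 1) with hp'def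
      have hp' : ∀ k, IsPMF (z' k) (p' k) := by
        intro k
        by_cases hk : k = i
        · subst hk; simp only [hz'def, hp'def, Function.update_self]
          exact isPMF_binPMF_one
        · simp only [hz'def, hp'def, Function.update_of_ne hk]
          exact hp k
      -- p i is the point mass at 1
      have hpi1 : p i 1 = 1 := by
        obtain ⟨h0, hsupp, hsum⟩ := hp i
        rw [hzi, Finset.Icc_self, Finset.sum_singleton] at hsum
        exact hsum
      have hpi0 : ∀ t, t ≠ 1 → p i t = 0 := by
        intro t ht
        exact (hp i).2.1 t (by rw [hzi]; simp only [Finset.mem_Icc, not_and, not_le]; omega)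
      have hzz : Function.update z' i (z' i - 1) = z := by
        funext k
        by_cases hk : k = i
        · subst hk; simp [hz'def, hzi]
        · simp [hz'def, Function.update_of_ne hk]
      have hpp : Function.update p' i (collapsePM 1 (p' i)) = p := by
        have hcol : collapsePM 1 (binPMF 1) = p i := by
          funext t
          rcases Nat.lt_or_ge t 1 with h | h
        -- t = 0
          · have : t = 0 := by omega
            subst this
            simp [collapsePM, binPMF, hpi0 0 (by omega)]
          · rcases Nat.lt_or_ge t 2 with h2 | h2
            · have : t = 1 := by omega
              subst this
              simp [collapsePM, binPMF, hpi1]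
            · rw [collapsePM, if_neg (by omega), if_pos (by omega),
                hpi0 t (by omega), zero_add]
              simp only [binPMF, if_neg (by omega : ¬ t + 1 = 1),
                if_neg (by omega : ¬ t + 1 = 2)]
        funext k
        by_cases hk : k = i
        · subst hk
          simp [hp'def, hcol]
        · simp [hp'def, Function.update_of_ne hk]
      have hones : (fun _ : Fin n => 1) ∈ prodBox z := by
        simp only [prodBox, Fintype.mem_piFinset, Finset.mem_Icc]
        intro k; rcases hz k with h | h <;> omega
      have hIAeq := hIA z' p' hp' i 1 (by
          simp only [hz'def, Function.update_self, Finset.mem_Icc]; omega)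
        (fun _ => 1) (by rw [hzz]; exact hones)
      rw [hzz, hpp] at hIAeq
      -- the second term vanishes
      have hzero : f z' p' (Function.update (fun _ => 1) i 2) = 0 := by
        obtain ⟨⟨hnn, _, _⟩, hmarg⟩ := hf z' p' hp'
        have hm2 : jointMarginal z' (f z' p') i 2 = 0 := by
          rw [hmarg i 2, hp'def, Function.update_self]
          simp [binPMF]
        have hmem : Function.update (fun _ : Fin n => 1) i 2 ∈
            (prodBox z').filter fun s => s i = 2 := by
          simp only [Finset.mem_filter, prodBox, Fintype.mem_piFinset, Finset.mem_Icc,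
            Function.update_self, and_true]
          intro k
          by_cases hk : k = i
          · subst hk; simp [hz'def]
          · rw [Function.update_of_ne hk]
            simp only [hz'def, Function.update_of_ne hk]
            rcases hz k with h | h <;> omega
        have hle := Finset.single_le_sum (f := fun s => f z' p' s)
          (fun s _ => hnn s) hmem
        rw [← jointMarginal, hm2] at hle
        exact le_antisymm hle (hnn _)
      rw [if_pos (le_refl 1), if_pos (le_refl 1)] at hIAeq
      simp only [show (fun _ : Fin n => 1) i + 1 = 2 from rfl] at hIAeq
      rw [hzero, add_zero] at hIAeq
      -- recursive call
      have hz2 : ∀ k, z' k = 1 ∨ z' k = 2 := by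
        intro k
        by_cases hk : k = i
        · subst hk; right; simp [hz'def]
        · simp only [hz'def, Function.update_of_ne hk]; exact hz k
      have hcard' : (Finset.univ.filter fun k => z' k = 1).card ≤ N := by
        have hsub : (Finset.univ.filter fun k => z' k = 1) ⊆
            (Finset.univ.filter fun k => z k = 1).erase i := by
          intro k hk
          simp only [Finset.mem_filter, Finset.mem_univ, true_and] at hk
          have hki : k ≠ i := by
            intro h; subst h; simp [hz'def] at hk
          simp only [Finset.mem_erase, Finset.mem_filter, Finset.mem_univ, true_and]
          refine ⟨hki, ?_⟩
          rwa [hz'def, Function.update_of_ne hki] at hk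
        have hmemi : i ∈ Finset.univ.filter fun k => z k = 1 := by simp [hzi]
        have := Finset.card_le_card hsub
        rw [Finset.card_erase_of_mem hmemi] at this
        have hpos := Finset.card_pos.mpr ⟨i, hmemi⟩
        omega
      have hrec := ih z' p' hp' hz2 hcard'
      rw [hIAeq, hrec]
      congr 1
      funext k
      by_cases hk : k = i
      · subst hk
        simp only [hp'def, Function.update_self]
        have h1 : pmfCDF (binPMF 1) 1 = 1 := by
          unfold pmfCDF; rw [Finset.Icc_self, Finset.sum_singleton]; simp [binPMF]
        have h2 : pmfCDF (p k) 1 = 1 := by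
          unfold pmfCDF; rw [Finset.Icc_self, Finset.sum_singleton, hpi1]
        rw [h1, h2]
      · simp only [hp'def, Function.update_of_ne hk]
    · push_neg at hex
      refine expand_base f z p hp fun i => ?_
      rcases hz i with h | h
      · exact absurd h (hex i)
      · exact h

lemma terminal_case {n : ℕ} (f : Model n) (hf : IsModel f) (hIA : SatisfiesIA f)
    (z : Fin n → ℕ) (p : Fin n → ℕ → ℝ) (hp : ∀ i, IsPMF (z i) (p i))
    (s : Fin n → ℕ) (hs : s ∈ prodBox z)
    (hterm : ∀ i, z i = 1 ∨ (z i = 2 ∧ s i = 1)) :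
    jointCDF (f z p) s =
      f (fun _ => 2) (fun i => binPMF (pmfCDF (p i) (s i))) (fun _ => 1) := by
  have hsmem : ∀ i, 1 ≤ s i ∧ s i ≤ z i := by
    intro i
    have := hs
    simp only [prodBox, Fintype.mem_piFinset, Finset.mem_Icc] at this
    exact this i
  have hs1 : ∀ i, s i = 1 := by
    intro i
    rcases hterm i with h | ⟨_, h⟩
    · have := hsmem i; omega
    · exact h
  rw [jointCDF, piFinset_ones s hs1, Finset.sum_singleton]
  have hz : ∀ i, z i = 1 ∨ z i = 2 := fun i => (hterm i).imp id And.left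
  rw [expand_lemma f hf hIA (Finset.univ.filter fun i => z i = 1).card z p hp hz le_rfl]
  congr 1
  funext i
  rw [hs1 i]

lemma main_lemma {n : ℕ} (f : Model n) (hf : IsModel f) (hIA : SatisfiesIA f) :
    ∀ M (z : Fin n → ℕ) (p : Fin n → ℕ → ℝ), (∀ i, IsPMF (z i) (p i)) →
      ∀ s ∈ prodBox z, (∑ i, z i) ≤ M →
      jointCDF (f z p) s =
        f (fun _ => 2) (fun i => binPMF (pmfCDF (p i) (s i))) (fun _ => 1) := by
  intro M
  induction M with
  | zero =>
    intro z p hp s hs hM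
    apply terminal_case f hf hIA z p hp s hs
    intro i
    exfalso
    have h1 : 1 ≤ s i ∧ s i ≤ z i := by
      have := hs
      simp only [prodBox, Fintype.mem_piFinset, Finset.mem_Icc] at this
      exact this i
    have h2 : z i ≤ ∑ k, z k :=
      Finset.single_le_sum (fun k _ => Nat.zero_le _) (Finset.mem_univ i)
    omega
  | succ M ih =>
    intro z p hp s hs hM
    have hsmem : ∀ i, 1 ≤ s i ∧ s i ≤ z i := by
      intro i
      have := hs
      simp only [prodBox, Fintype.mem_piFinset, Finset.mem_Icc] at this
      exact this i
    by_cases hex : ∃ i, 2 ≤ z i ∧ (2 ≤ s i ∨ s i + 2 ≤ z i)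
    · obtain ⟨i, hzi, hcase⟩ := hex
      -- common: the reduced z
      have hsum' : ∑ k, Function.update z i (z i - 1) k ≤ M := by
        rw [Finset.sum_update_of_mem (Finset.mem_univ i)]
        have h2 : ∑ k, z k = ∑ k ∈ Finset.univ \ {i}, z k + z i :=
          Finset.sum_eq_sum_sdiff_singleton_add (Finset.mem_univ i) _
        omega
      by_cases hA : s i + 2 ≤ z i
      · -- collapse above s i, at j = z i - 1
        set j := z i - 1 with hjdef
        have hj : j ∈ Finset.Icc 1 (z i - 1) := by simp [hjdef]; omega
        set z' := Function.update z i (z i - 1) with hz'def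
        set p' := Function.update p i (collapsePM j (p i)) with hp'def
        have hp' : ∀ k, IsPMF (z' k) (p' k) := by
          intro k
          by_cases hk : k = i
          · subst hk
            simp only [hz'def, hp'def, Function.update_self]
            exact collapse_isPMF (hp k) (by omega) le_rfl (by omega)
          · simp only [hz'def, hp'def, Function.update_of_ne hk]
            exact hp k
        have hs' : s ∈ prodBox z' := by
          simp only [prodBox, Fintype.mem_piFinset, Finset.mem_Icc]
          intro k
          by_cases hk : k = i
          · subst hk
            simp only [hz'def, Function.update_self]
            have := hsmem k; omega
          · simp only [hz'def, Function.update_of_ne hk]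
            exact hsmem k
        have hjcdf : jointCDF (f z' p') s = jointCDF (f z p) s := by
          unfold jointCDF
          refine Finset.sum_congr rfl fun t ht => ?_
          simp only [Fintype.mem_piFinset, Finset.mem_Icc] at ht
          have htmem : t ∈ prodBox z' := by
            simp only [prodBox, Fintype.mem_piFinset, Finset.mem_Icc]
            intro k
            by_cases hk : k = i
            · subst hk
              simp only [hz'def, Function.update_self]
              have := ht k; have := hsmem k; omega
            · simp only [hz'def, Function.update_of_ne hk]
              have := ht k; have := hsmem k; omega
          have hIAeq := hIA z p hp i j hj t htmem
          rw [← hz'def, ← hp'def] at hIAeq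
          rw [hIAeq, if_pos (by have := ht i; omega : t i ≤ j),
            if_neg (by have := ht i; omega : ¬ j ≤ t i), add_zero]
        rw [← hjcdf, ih z' p' hp' s hs' hsum']
        congr 1
        funext k
        by_cases hk : k = i
        · subst hk
          simp only [hp'def, Function.update_self]
          rw [collapse_cdf (p k) j (by omega), if_pos (by omega : s k < j)]
        · simp only [hp'def, Function.update_of_ne hk]
      · -- collapse below: j = s i - 1, s i ≥ 2
        have hsi2 : 2 ≤ s i := by rcases hcase with h | h; exacts [h, absurd h hA]
        set j := s i - 1 with hjdef
        have hj : j ∈ Finset.Icc 1 (z i - 1) := by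
          simp only [hjdef, Finset.mem_Icc]
          have := hsmem i; omega
        set z' := Function.update z i (z i - 1) with hz'def
        set p' := Function.update p i (collapsePM j (p i)) with hp'def
        set s' := Function.update s i (s i - 1) with hs'def
        have hp' : ∀ k, IsPMF (z' k) (p' k) := by
          intro k
          by_cases hk : k = i
          · subst hk
            simp only [hz'def, hp'def, Function.update_self]
            refine collapse_isPMF (hp k) (by omega) ?_ (by omega)
            have := hsmem k; omega
          · simp only [hz'def, hp'def, Function.update_of_ne hk]
            exact hp k
        have hs' : s' ∈ prodBox z' := by
          simp only [prodBox, Fintype.mem_piFinset, Finset.mem_Icc]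
          intro k
          by_cases hk : k = i
          · subst hk
            simp only [hz'def, hs'def, Function.update_self]
            have := hsmem k; omega
          · simp only [hz'def, hs'def, Function.update_of_ne hk]
            exact hsmem k
        -- the joint CDF identity
        have hjcdf : jointCDF (f z' p') s' = jointCDF (f z p) s := by
          unfold jointCDF
          set T' := Fintype.piFinset fun k => Finset.Icc 1 (s' k) with hT'def
          set T := Fintype.piFinset fun k => Finset.Icc 1 (s k) with hTdef
          have hT'mem : ∀ t ∈ T', (∀ k, 1 ≤ t k) ∧ (∀ k, k ≠ i → t k ≤ s k) ∧ t i ≤ s i - 1 := by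
            intro t ht
            simp only [hT'def, Fintype.mem_piFinset, Finset.mem_Icc] at ht
            refine ⟨fun k => (ht k).1, fun k hk => ?_, ?_⟩
            · have := (ht k).2
              rwa [hs'def, Function.update_of_ne hk] at this
            · have := (ht i).2
              rwa [hs'def, Function.update_self] at this
          have step1 : ∀ t ∈ T', f z' p' t =
              f z p t + if j ≤ t i then f z p (Function.update t i (t i + 1)) else 0 := by
            intro t ht
            obtain ⟨ht1, ht2, ht3⟩ := hT'mem t ht
            have htmem : t ∈ prodBox z' := by
              simp only [prodBox, Fintype.mem_piFinset, Finset.mem_Icc]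
              intro k
              by_cases hk : k = i
              · subst hk
                simp only [hz'def, Function.update_self]
                have := hsmem k; exact ⟨ht1 k, by omega⟩
              · simp only [hz'def, Function.update_of_ne hk]
                have := hsmem k; exact ⟨ht1 k, by have := ht2 k hk; omega⟩
            have hIAeq := hIA z p hp i j hj t htmem
            rw [← hz'def, ← hp'def] at hIAeq
            rw [hIAeq, if_pos (by omega : t i ≤ j)]
          rw [Finset.sum_congr rfl step1, Finset.sum_add_distrib, ← Finset.sum_filter]
          -- the shifted sum
          have step2 : ∑ t ∈ T'.filter (fun t => j ≤ t i),
              f z p (Function.update t i (t i + 1)) =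
              ∑ t ∈ T.filter (fun t => s i ≤ t i), f z p t := by
            refine Finset.sum_nbij' (i := fun t => Function.update t i (s i))
              (j := fun t => Function.update t i (s i - 1)) ?_ ?_ ?_ ?_ ?_
            · intro t ht
              simp only [Finset.mem_filter] at ht
              obtain ⟨ht1, ht2, ht3⟩ := hT'mem t ht.1
              simp only [Finset.mem_filter, hTdef, Fintype.mem_piFinset, Finset.mem_Icc]
              constructor
              · intro k
                by_cases hk : k = i
                · subst hk; rw [Function.update_self]
                  exact ⟨by omega, le_rfl⟩
                · rw [Function.update_of_ne hk]
                  exact ⟨ht1 k, ht2 k hk⟩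
              · rw [Function.update_self]
            · intro t ht
              simp only [Finset.mem_filter, hTdef, Fintype.mem_piFinset, Finset.mem_Icc] at ht
              simp only [Finset.mem_filter, hT'def, Fintype.mem_piFinset, Finset.mem_Icc,
                Function.update_self]
              constructor
              · intro k
                by_cases hk : k = i
                · subst hk
                  simp only [Function.update_self, hs'def]
                  omega
                · rw [Function.update_of_ne hk, hs'def, Function.update_of_ne hk]
                  exact (ht.1 k)
              · omega
            · intro t ht
              simp only [Finset.mem_filter] at ht
              obtain ⟨ht1, ht2, ht3⟩ := hT'mem t ht.1
              have hti : t i = s i - 1 := by have := ht.2; omega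
              funext k
              by_cases hk : k = i
              · subst hk
                simp [Function.update_self, hti]
              · simp [Function.update_of_ne hk]
            · intro t ht
              simp only [Finset.mem_filter, hTdef, Fintype.mem_piFinset, Finset.mem_Icc] at ht
              have hti : t i = s i := by have := (ht.1 i).2; have := ht.2; omega
              funext k
              by_cases hk : k = i
              · subst hk
                simp [Function.update_self, hti]
              · simp [Function.update_of_ne hk]
            · intro t ht
              simp only [Finset.mem_filter] at ht
              obtain ⟨ht1, ht2, ht3⟩ := hT'mem t ht.1
              have hti : t i = s i - 1 := by have := ht.2; omega
              have : t i + 1 = s i := by omega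
              rw [this]
          rw [step2]
          -- now split T
          have hfilter1 : T.filter (fun t => t i ≤ s i - 1) = T' := by
            ext t
            simp only [Finset.mem_filter, hTdef, hT'def, Fintype.mem_piFinset,
              Finset.mem_Icc]
            constructor
            · rintro ⟨h1, h2⟩
              intro k
              by_cases hk : k = i
              · subst hk
                rw [hs'def, Function.update_self]
                exact ⟨(h1 k).1, h2⟩
              · rw [hs'def, Function.update_of_ne hk]
                exact h1 k
            · intro h1
              constructor
              · intro k
                by_cases hk : k = i
                · subst hk
                  have := h1 k
                  rw [hs'def, Function.update_self] at this
                  omega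
                · have := h1 k
                  rwa [hs'def, Function.update_of_ne hk] at this
              · have := h1 i
                rw [hs'def, Function.update_self] at this
                exact this.2
          have hfilter2 : T.filter (fun t => ¬ t i ≤ s i - 1) =
              T.filter (fun t => s i ≤ t i) := by
            refine Finset.filter_congr fun t ht => ?_
            simp only [hTdef, Fintype.mem_piFinset, Finset.mem_Icc] at ht
            have := ht i
            constructor <;> intro h <;> omega
          calc ∑ t ∈ T', f z p t + ∑ t ∈ T.filter (fun t => s i ≤ t i), f z p t
              = ∑ t ∈ T.filter (fun t => t i ≤ s i - 1), f z p t
                + ∑ t ∈ T.filter (fun t => ¬ t i ≤ s i - 1), f z p t := by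
                rw [hfilter1, hfilter2]
            _ = ∑ t ∈ T, f z p t := Finset.sum_filter_add_sum_filter_not T _ _
        rw [← hjcdf, ih z' p' hp' s' hs' hsum']
        congr 1
        funext k
        by_cases hk : k = i
        · subst hk
          simp only [hp'def, hs'def, Function.update_self]
          rw [collapse_cdf (p k) j (by simp only [hjdef]; omega),
            if_neg (by simp only [hjdef]; omega : ¬ s k - 1 < j)]
          have h9 : s k - 1 + 1 = s k := by omega
          rw [h9]
        · simp only [hp'def, hs'def, Function.update_of_ne hk]
    · push_neg at hex
      apply terminal_case f hf hIA z p hp s hs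
      intro i
      have h1 := hsmem i
      have h2 := hex i
      by_cases h : 2 ≤ z i
      · right
        have := h2 h
        omega
      · left; omega

/-- under IA, the CDF of `f(p)` at `s` is determined solely by the vector of
marginal CDF values at `s`: it equals the mass `f(b_x)` assigns to `(1,…,1)`, where
`x = (F_{p₁}(s₁),…,F_{pₙ}(sₙ))` and `b_x` is the tuple of binary distributions. -/
theorem IA_cdf_binary (n : ℕ) (f : Model n) (hf : IsModel f) (hIA : SatisfiesIA f)
    (z : Fin n → ℕ) (p : Fin n → ℕ → ℝ) (hp : ∀ i, IsPMF (z i) (p i))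
    (s : Fin n → ℕ) (hs : s ∈ prodBox z) :
    jointCDF (f z p) s =
      f (fun _ => 2) (fun i => binPMF (pmfCDF (p i) (s i))) (fun _ => 1) :=
  main_lemma f hf hIA (∑ i, z i) z p hp s hs le_rfl
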